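/- Let X be a separable metric space and (μ_j) Borel probability measures on X converging weakly to a Borel probability measure μ. Then for every point x in the support of μ there exists a sequence (x_j) with x_j in the support of μ_j for every j and x_j → x. -/

import Mathlib

open MeasureTheory Filter Topology ENNReal

/-- The support of a Borel measure: the set of points all of whose open neighbourhoods
have positive measure. -/
def MeasSupport {Y : Type*} [TopologicalSpace Y] [MeasurableSpace Y]
    (μ : Measure Y) : Set Y :=
  {x | ∀ U : Set Y, IsOpen U → x ∈ U → 0 < μ U}

/-- In a second-countable space, any open set of positive measure meets the support. -/
lemma exists_mem_measSupport {Y : Type*} [TopologicalSpace Y]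
    [SecondCountableTopology Y] [MeasurableSpace Y]
    (ν : Measure Y) {U : Set Y} (hU : IsOpen U) (hpos : 0 < ν U) :
    ∃ y ∈ U, y ∈ MeasSupport ν := by
  by_contra h
  push_neg at h
  -- every point of U has an open neighbourhood of measure zero
  have h' : ∀ y : U, ∃ V : Set Y, IsOpen V ∧ (y : Y) ∈ V ∧ ν V = 0 := by
    rintro ⟨y, hy⟩
    obtain ⟨V, hVo, hyV, hV0⟩ := by
      have := h y hy
      simp only [MeasSupport, Set.mem_setOf_eq] at this
      push_neg at this
      exact this
    exact ⟨V, hVo, hyV, le_antisymm hV0 zero_le⟩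
  choose V hVo hyV hV0 using h'
  obtain ⟨T, hTc, hTU⟩ := TopologicalSpace.isOpen_iUnion_countable V hVo
  have hUsub : U ⊆ ⋃ i ∈ T, V i := by
    rw [hTU]
    intro y hy
    exact Set.mem_iUnion.mpr ⟨⟨y, hy⟩, hyV ⟨y, hy⟩⟩
  have : ν U = 0 :=
    measure_mono_null hUsub (measure_biUnion_null_iff hTc |>.mpr fun i _ => hV0 i)
  exact hpos.ne' this

theorem stmt_7 {X : Type*} [MetricSpace X] [TopologicalSpace.SeparableSpace X]
    [MeasurableSpace X] [BorelSpace X]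
    (μ : ℕ → Measure X) (μl : Measure X)
    [∀ j, IsProbabilityMeasure (μ j)] [IsProbabilityMeasure μl]
    (hweak : ∀ g : X → ℝ, Continuous g → (∃ C, ∀ z, |g z| ≤ C) →
      Tendsto (fun j => ∫ z, g z ∂(μ j)) atTop (𝓝 (∫ z, g z ∂μl))) :
    ∀ x ∈ MeasSupport μl, ∃ xj : ℕ → X,
      (∀ j, xj j ∈ MeasSupport (μ j)) ∧ Tendsto xj atTop (𝓝 x) := by
  haveI : SecondCountableTopology X := UniformSpace.secondCountable_of_separable X
  intro x hx
  -- package as probability measures and get weak convergence in the topology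
  set P : ℕ → ProbabilityMeasure X := fun j => ⟨μ j, inferInstance⟩ with hP
  set Pl : ProbabilityMeasure X := ⟨μl, inferInstance⟩ with hPl
  have hT : Tendsto P atTop (𝓝 Pl) := by
    rw [ProbabilityMeasure.tendsto_iff_forall_integral_tendsto]
    intro f
    exact hweak f f.continuous ⟨‖f‖, fun z => by
      simpa [Real.norm_eq_abs] using f.norm_coe_le_norm z⟩
  -- supports are nonempty
  have hne : ∀ j, (MeasSupport (μ j)).Nonempty := by
    intro j
    obtain ⟨y, -, hy⟩ := exists_mem_measSupport (μ j) isOpen_univ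
      (by simp [measure_univ])
    exact ⟨y, hy⟩
  -- for every ε > 0, eventually the support of μ j meets the ball of radius ε
  have key : ∀ ε : ℝ, 0 < ε → ∀ᶠ j in atTop,
      ∃ y ∈ MeasSupport (μ j), dist x y < ε := by
    intro ε hε
    have hball : 0 < μl (Metric.ball x ε) :=
      hx _ Metric.isOpen_ball (Metric.mem_ball_self hε)
    have hliminf : (Pl : Measure X) (Metric.ball x ε)
        ≤ atTop.liminf fun j => (P j : Measure X) (Metric.ball x ε) :=
      ProbabilityMeasure.le_liminf_measure_open_of_tendsto hT Metric.isOpen_ball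
    have hlim : (0 : ℝ≥0∞) < atTop.liminf fun j => (P j : Measure X) (Metric.ball x ε) :=
      lt_of_lt_of_le hball hliminf
    filter_upwards [eventually_lt_of_lt_liminf hlim] with j hj
    obtain ⟨y, hyU, hy⟩ := exists_mem_measSupport (μ j) Metric.isOpen_ball hj
    exact ⟨y, hy, by simpa [dist_comm] using hyU⟩
  -- the infimum distances tend to zero
  have hinf : Tendsto (fun j => Metric.infDist x (MeasSupport (μ j))) atTop (𝓝 0) := by
    rw [Metric.tendsto_nhds]
    intro ε hε
    filter_upwards [key (ε / 2) (by linarith)] with j hj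
    obtain ⟨y, hy, hdy⟩ := hj
    have h1 : Metric.infDist x (MeasSupport (μ j)) ≤ dist x y := Metric.infDist_le_dist_of_mem hy
    have h0 : 0 ≤ Metric.infDist x (MeasSupport (μ j)) := Metric.infDist_nonneg
    rw [Real.dist_eq, sub_zero, abs_of_nonneg h0]
    linarith
  -- choose points almost realizing the infimum distance
  have hchoice : ∀ j : ℕ, ∃ y ∈ MeasSupport (μ j),
      dist x y < Metric.infDist x (MeasSupport (μ j)) + 1 / (j + 1) := by
    intro j
    have : Metric.infDist x (MeasSupport (μ j))
        < Metric.infDist x (MeasSupport (μ j)) + 1 / (j + 1) := by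
      have : (0 : ℝ) < 1 / (j + 1) := by positivity
      linarith
    exact (Metric.infDist_lt_iff (hne j)).mp this
  choose xj hxj hdxj using hchoice
  refine ⟨xj, hxj, ?_⟩
  rw [tendsto_iff_dist_tendsto_zero]
  apply squeeze_zero (fun j => dist_nonneg)
    (fun j => (le_of_lt (by simpa [dist_comm] using hdxj j)))
  have h1 : Tendsto (fun j : ℕ => (1 : ℝ) / (j + 1)) atTop (𝓝 0) :=
    tendsto_one_div_add_atTop_nhds_zero_nat
  simpa using hinf.add h1
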